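/- Let γ be a connected graph with half-edges and 𝒱 ⊆ Ver with 𝒱 ≠ Ver. Then the number of edges of γ with exactly one flag in ε⁻¹(𝒱) — which equals |E(γ)| − |E_γ(𝒱)| − |E_γ(Ver ∖ 𝒱)| — plus |F°_γ(𝒱)| is at least 2·|π₀(γ,𝒱)|. -/

import Mathlib

/-- The set of edges of a graph with half-edges: unordered pairs `{f, ϑ f}`. -/
def edgeSet {F : Type*} (ϑ : F → F) : Set (Set F) :=
  {e | ∃ f, e = {f, ϑ f}}

/-- The edges both of whose flags have ε-image in `S`. -/
def edgesIn {V F : Type*} (ε : F → V) (ϑ : F → F) (S : Set V) : Set (Set F) :=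
  {e | ∃ f, e = {f, ϑ f} ∧ ε f ∈ S ∧ ε (ϑ f) ∈ S}

/-- One-step adjacency in the graph: `v` and `v'` are the two endpoints of an edge. -/
def Step {V F : Type*} (ε : F → V) (ϑ : F → F) (v v' : V) : Prop :=
  ∃ f, ε f = v ∧ ε (ϑ f) = v'

/-- The graph is connected: any two distinct vertices are joined by a chain of edges. -/
def IsConnectedGraph {V F : Type*} (ε : F → V) (ϑ : F → F) : Prop :=
  ∀ v v' : V, v ≠ v' → Relation.ReflTransGen (Step ε ϑ) v v'

/-- One-step adjacency within the induced subgraph on the vertex subset `S`. -/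
def StepIn {V F : Type*} (ε : F → V) (ϑ : F → F) (S : Set V) (v v' : V) : Prop :=
  v ∈ S ∧ v' ∈ S ∧ ∃ f, ε f = v ∧ ε (ϑ f) = v'

/-- The connected component of `v` in the induced subgraph on `S`. -/
def component {V F : Type*} (ε : F → V) (ϑ : F → F) (S : Set V) (v : V) : Set V :=
  {w | Relation.ReflTransGen (StepIn ε ϑ S) v w}

/-- `π₀(γ,S)`: the set of connected components of the induced subgraph on `S`. -/
def pi0 {V F : Type*} (ε : F → V) (ϑ : F → F) (S : Set V) : Set (Set V) :=
  {C | ∃ v ∈ S, C = component ε ϑ S v}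

/-- The crossing edges of a subset `C` of vertices: edges with exactly one flag
having ε-image in `C`. -/
def crossingEdges {V F : Type*} (ε : F → V) (ϑ : F → F) (C : Set V) : Set (Set F) :=
  {e | ∃ f, e = {f, ϑ f} ∧ ε f ∉ C ∧ ε (ϑ f) ∈ C}

/-- One-step adjacency in the graph obtained by deleting the two flags `f₀`, `ϑ f₀`. -/
def StepAvoid {V F : Type*} (ε : F → V) (ϑ : F → F) (f₀ : F) (v v' : V) : Prop :=
  ∃ g, g ≠ f₀ ∧ g ≠ ϑ f₀ ∧ ε g = v ∧ ε (ϑ g) = v'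

/-- The flag `f₀` disconnects `C` from the rest of the graph: after deleting the flags
`f₀` and `ϑ f₀`, there is no chain of edges from a vertex of `C` to a vertex outside `C`. -/
def Disconnects {V F : Type*} (ε : F → V) (ϑ : F → F) (C : Set V) (f₀ : F) : Prop :=
  ∀ v ∈ C, ∀ v' ∉ C, ¬ Relation.ReflTransGen (StepAvoid ε ϑ f₀) v v'

/-- `F°_γ(S)`: the flags `f` with `ε f ∉ S` that disconnect from the rest of the graph
the connected component of the induced subgraph on `S` containing `ε (ϑ f)`. -/
def Fcirc {V F : Type*} (ε : F → V) (ϑ : F → F) (S : Set V) : Set F :=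
  {f | ε f ∉ S ∧ ε (ϑ f) ∈ S ∧ Disconnects ε ϑ (component ε ϑ S (ε (ϑ f))) f}

/-- `F†_γ(S)`: the flags of `F°_γ(S)` whose associated component carries no marked label. -/
def Fdagger {V F L : Type*} (ε : F → V) (ϑ : F → F) (εS : L → V) (S : Set V) : Set F :=
  {f | f ∈ Fcirc ε ϑ S ∧ ∀ s : L, εS s ∉ component ε ϑ S (ε (ϑ f))}

section Aux
variable {V F : Type*} {ε : F → V} {ϑ : F → F}

lemma mem_pair_cases {f g : F} (h : ({f, ϑ f} : Set F) = {g, ϑ g}) : g = f ∨ g = ϑ f := by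
  have : g ∈ ({f, ϑ f} : Set F) := h ▸ (by simp)
  simpa using this

lemma stepIn_symm (hinv : Function.Involutive ϑ) {S : Set V} :
    Symmetric (StepIn ε ϑ S) := by
  rintro v v' ⟨hv, hv', f, hf, hf'⟩
  exact ⟨hv', hv, ϑ f, hf', by rw [hinv]; exact hf⟩

lemma mem_component_self {S : Set V} (v : V) : v ∈ component ε ϑ S v :=
  Relation.ReflTransGen.refl

lemma component_subset {S : Set V} {v : V} (hv : v ∈ S) : component ε ϑ S v ⊆ S := by
  intro w hw
  induction hw with
  | refl => exact hv
  | tail _ h2 _ => exact h2.2.1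

lemma component_eq_of_mem (hinv : Function.Involutive ϑ) {S : Set V} {v w : V}
    (hw : w ∈ component ε ϑ S v) : component ε ϑ S w = component ε ϑ S v := by
  have hs : Symmetric (Relation.ReflTransGen (StepIn ε ϑ S)) := by
    haveI : Std.Symm (StepIn ε ϑ S) := ⟨fun a b h => stepIn_symm (ε := ε) (S := S) hinv h⟩
    exact fun a b h => (Relation.ReflTransGen.symmetric (r := StepIn ε ϑ S)).symm a b h
  ext u
  constructor
  · intro hu; exact Relation.ReflTransGen.trans hw hu
  · intro hu; exact Relation.ReflTransGen.trans (hs hw) hu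

lemma component_closed (hinv : Function.Involutive ϑ) {S : Set V} {v w w' : V}
    (hw : w ∈ component ε ϑ S v) (h : StepIn ε ϑ S w w') : w' ∈ component ε ϑ S v :=
  Relation.ReflTransGen.tail hw h

lemma exists_boundary {r : V → V → Prop} {C : Set V} {v v' : V}
    (h : Relation.ReflTransGen r v v') (hv : v ∈ C) (hv' : v' ∉ C) :
    ∃ a b, a ∈ C ∧ b ∉ C ∧ r a b := by
  induction h with
  | refl => exact absurd hv hv'
  | @tail b c h1 h2 ih =>
    by_cases hb : b ∈ C
    · exact ⟨b, c, hb, hv', h2⟩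
    · exact ih hb

/-- crossing edges of a component are crossing edges of `S`; in fact the outside flag
    lands outside `S`. -/
lemma crossing_out (hinv : Function.Involutive ϑ) {S : Set V} {C : Set V}
    (hC : C ∈ pi0 ε ϑ S) {g : F} (hg : ε g ∉ C) (hg' : ε (ϑ g) ∈ C) : ε g ∉ S := by
  obtain ⟨v, hv, rfl⟩ := hC
  intro hgS
  exact hg (component_closed hinv hg'
    ⟨component_subset hv hg', hgS, ϑ g, rfl, by rw [hinv]⟩)

lemma crossing_subset (hinv : Function.Involutive ϑ) {S : Set V} {C : Set V}
    (hC : C ∈ pi0 ε ϑ S) : crossingEdges ε ϑ C ⊆ crossingEdges ε ϑ S := by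
  rintro e ⟨g, rfl, hg, hg'⟩
  have hCS : C ⊆ S := by obtain ⟨v, hv, rfl⟩ := hC; exact component_subset hv
  exact ⟨g, rfl, crossing_out hinv hC hg hg', hCS hg'⟩

lemma crossing_nonempty (hinv : Function.Involutive ϑ) (hconn : IsConnectedGraph ε ϑ)
    {S : Set V} (hS : S ≠ Set.univ) {C : Set V} (hC : C ∈ pi0 ε ϑ S) :
    (crossingEdges ε ϑ C).Nonempty := by
  obtain ⟨v, hv, rfl⟩ := hC
  obtain ⟨u, hu⟩ : ∃ u, u ∉ S := by
    by_contra h; push_neg at h; exact hS (Set.eq_univ_iff_forall.2 h)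
  have hvC : v ∈ component ε ϑ S v := mem_component_self v
  have huC : u ∉ component ε ϑ S v := fun h => hu (component_subset hv h)
  have hne : v ≠ u := fun h => hu (h ▸ hv)
  obtain ⟨a, b, ha, hb, f, hf, hf'⟩ := exists_boundary (hconn v u hne) hvC huC
  refine ⟨{ϑ f, ϑ (ϑ f)}, ϑ f, rfl, by rw [hf']; exact hb, by rw [hinv, hf]; exact ha⟩

lemma unique_crossing_Fcirc (hinv : Function.Involutive ϑ) {S : Set V} {C : Set V}
    (hC : C ∈ pi0 ε ϑ S) {e : Set F} (huniq : crossingEdges ε ϑ C = {e}) :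
    ∃ f ∈ Fcirc ε ϑ S, component ε ϑ S (ε (ϑ f)) = C := by
  have he : e ∈ crossingEdges ε ϑ C := huniq ▸ rfl
  obtain ⟨f, rfl, hf, hf'⟩ := he
  have hfS : ε f ∉ S := crossing_out hinv hC hf hf'
  have hcomp : component ε ϑ S (ε (ϑ f)) = C := by
    obtain ⟨v, hv, rfl⟩ := hC
    exact component_eq_of_mem hinv hf'
  refine ⟨f, ⟨hfS, by
      obtain ⟨v, hv, rfl⟩ := hC; exact component_subset hv hf', ?_⟩, hcomp⟩
  rw [hcomp]
  intro w hw w' hw' hpath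
  obtain ⟨a, b, ha, hb, g, hg1, hg2, hg3, hg4⟩ := exists_boundary hpath hw hw'
  have : ({ϑ g, ϑ (ϑ g)} : Set F) ∈ crossingEdges ε ϑ C :=
    ⟨ϑ g, rfl, by rw [hg4]; exact hb, by rw [hinv, hg3]; exact ha⟩
  rw [huniq, Set.mem_singleton_iff] at this
  have hgmem : g ∈ ({f, ϑ f} : Set F) := by
    rw [← this]; right; rw [hinv g]; exact rfl
  rcases hgmem with h | h
  · exact hg1 h
  · exact hg2 h

end Aux

section Main
variable {V F : Type*} {ε : F → V} {ϑ : F → F}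

lemma edgesIn_flag {S : Set V} {e : Set F} (he : e ∈ edgesIn ε ϑ S) {g : F}
    (hg : g ∈ e) : ε g ∈ S := by
  obtain ⟨f, rfl, h1, h2⟩ := he
  rcases hg with h | h
  · exact h ▸ h1
  · exact h ▸ h2

lemma edge_partition (hinv : Function.Involutive ϑ) (S : Set V) :
    edgeSet ϑ = edgesIn ε ϑ S ∪ edgesIn ε ϑ Sᶜ ∪ crossingEdges ε ϑ S := by
  ext e
  constructor
  · rintro ⟨f, rfl⟩
    by_cases h1 : ε f ∈ S <;> by_cases h2 : ε (ϑ f) ∈ S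
    · exact Or.inl (Or.inl ⟨f, rfl, h1, h2⟩)
    · refine Or.inr ⟨ϑ f, ?_, h2, by rw [hinv]; exact h1⟩
      rw [hinv]; exact Set.pair_comm f (ϑ f)
    · exact Or.inr ⟨f, rfl, h1, h2⟩
    · refine Or.inl (Or.inr ⟨f, rfl, h1, h2⟩)
  · rintro ((⟨f, rfl, -⟩ | ⟨f, rfl, -⟩) | ⟨f, rfl, -⟩) <;> exact ⟨f, rfl⟩

lemma disj1 (S : Set V) : Disjoint (edgesIn ε ϑ S) (edgesIn ε ϑ Sᶜ) := by
  rw [Set.disjoint_left]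
  rintro e he he'
  obtain ⟨f, rfl, h1, h2⟩ := he
  exact edgesIn_flag he' (Or.inl rfl) h1

lemma disj2 (hinv : Function.Involutive ϑ) (S : Set V) :
    Disjoint (edgesIn ε ϑ S ∪ edgesIn ε ϑ Sᶜ) (crossingEdges ε ϑ S) := by
  rw [Set.disjoint_left]
  rintro e he he'
  obtain ⟨g, rfl, hg1, hg2⟩ := he'
  rcases he with h | h
  · exact hg1 (edgesIn_flag h (Or.inl rfl))
  · exact edgesIn_flag h (Or.inr rfl) hg2

lemma fcirc_count [Fintype V] [Fintype F] (hinv : Function.Involutive ϑ)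
    (hconn : IsConnectedGraph ε ϑ) {S : Set V} (hS : S ≠ Set.univ) :
    2 * (pi0 ε ϑ S).ncard ≤ (crossingEdges ε ϑ S).ncard + (Fcirc ε ϑ S).ncard := by
  classical
  have hP : (pi0 ε ϑ S).Finite := Set.toFinite _
  set T : Finset (Set V) := hP.toFinset with hT
  set B : Set V → Set F := fun C => {f ∈ Fcirc ε ϑ S | component ε ϑ S (ε (ϑ f)) = C}
    with hB
  set fA : Set V → Finset (Set F) := fun C => (Set.toFinite (crossingEdges ε ϑ C)).toFinset
    with hfA
  set fB : Set V → Finset F := fun C => (Set.toFinite (B C)).toFinset with hfB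
  have memT : ∀ C, C ∈ T ↔ C ∈ pi0 ε ϑ S := fun C => hP.mem_toFinset
  -- each component contributes at least 2
  have key1 : ∀ C ∈ T, 2 ≤ (fA C).card + (fB C).card := by
    intro C hC
    rw [memT] at hC
    have hne : (fA C).Nonempty := by
      obtain ⟨e, he⟩ := crossing_nonempty hinv hconn hS hC
      exact ⟨e, (Set.toFinite _).mem_toFinset.2 he⟩
    rcases Nat.lt_or_ge (fA C).card 2 with h | h
    · have h1 : (fA C).card = 1 := le_antisymm (by omega) (Finset.card_pos.2 hne)
      obtain ⟨e, he⟩ := Finset.card_eq_one.1 h1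
      have hAe : crossingEdges ε ϑ C = {e} := by
        ext x
        rw [← (Set.toFinite (crossingEdges ε ϑ C)).mem_toFinset]
        show x ∈ fA C ↔ _
        rw [he]; simp
      obtain ⟨f, hf, hfc⟩ := unique_crossing_Fcirc hinv hC hAe
      have : f ∈ fB C := by simp [hfB, hB, hf, hfc]
      have : 1 ≤ (fB C).card := Finset.card_pos.2 ⟨f, this⟩
      omega
    · omega
  -- disjointness of the A-families
  have dA : ∀ C ∈ T, ∀ C' ∈ T, C ≠ C' → Disjoint (fA C) (fA C') := by
    intro C hC C' hC' hne
    rw [memT] at hC hC'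
    rw [Finset.disjoint_left]
    intro e he he'
    rw [hfA, Set.Finite.mem_toFinset] at he he'
    obtain ⟨g, rfl, hg1, hg2⟩ := he
    obtain ⟨g', heq, hg1', hg2'⟩ := he'
    rcases mem_pair_cases (ϑ := ϑ) heq with h | h
    · subst h
      obtain ⟨v, hv, rfl⟩ := hC
      obtain ⟨v', hv', rfl⟩ := hC'
      exact hne ((component_eq_of_mem hinv hg2).symm.trans
        (component_eq_of_mem hinv hg2'))
    · subst h
      rw [hinv] at hg2'
      exact crossing_out hinv hC hg1 hg2
        (by obtain ⟨v', hv', rfl⟩ := hC'; exact component_subset hv' hg2')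
  have dB : ∀ C ∈ T, ∀ C' ∈ T, C ≠ C' → Disjoint (fB C) (fB C') := by
    intro C _ C' _ hne
    rw [Finset.disjoint_left]
    intro f hf hf'
    rw [hfB, Set.Finite.mem_toFinset] at hf hf'
    exact hne (hf.2 ▸ hf'.2)
  -- subset relations
  have sA : T.biUnion fA ⊆ (Set.toFinite (crossingEdges ε ϑ S)).toFinset := by
    intro e he
    rw [Finset.mem_biUnion] at he
    obtain ⟨C, hC, he⟩ := he
    rw [memT] at hC
    rw [hfA, Set.Finite.mem_toFinset] at he
    rw [Set.Finite.mem_toFinset]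
    exact crossing_subset hinv hC he
  have sB : T.biUnion fB ⊆ (Set.toFinite (Fcirc ε ϑ S)).toFinset := by
    intro f hf
    rw [Finset.mem_biUnion] at hf
    obtain ⟨C, hC, hf⟩ := hf
    rw [hfB, Set.Finite.mem_toFinset] at hf
    rw [Set.Finite.mem_toFinset]
    exact hf.1
  have cardA : ∑ C ∈ T, (fA C).card ≤ (crossingEdges ε ϑ S).ncard := by
    rw [Set.ncard_eq_toFinset_card _ (Set.toFinite _), ← Finset.card_biUnion dA]
    exact Finset.card_le_card sA
  have cardB : ∑ C ∈ T, (fB C).card ≤ (Fcirc ε ϑ S).ncard := by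
    rw [Set.ncard_eq_toFinset_card _ (Set.toFinite _), ← Finset.card_biUnion dB]
    exact Finset.card_le_card sB
  have hsum : 2 * T.card ≤ ∑ C ∈ T, ((fA C).card + (fB C).card) := by
    calc 2 * T.card = ∑ _C ∈ T, 2 := by rw [Finset.sum_const, smul_eq_mul, mul_comm]
    _ ≤ _ := Finset.sum_le_sum key1
  rw [Finset.sum_add_distrib] at hsum
  have : (pi0 ε ϑ S).ncard = T.card := Set.ncard_eq_toFinset_card _ hP
  omega

end Main

/-- For a connected graph with half-edges and a proper vertex subset `𝒱`,
the number of edges with exactly one flag in `ε⁻¹(𝒱)` equals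
`|E(γ)| − |E_γ(𝒱)| − |E_γ(Ver ∖ 𝒱)|`, and this number plus `|F°_γ(𝒱)|` is at least
`2·|π₀(γ,𝒱)|`. -/
theorem stmt3 {V F : Type*} [Fintype V] [Fintype F]
    (ε : F → V) (ϑ : F → F) (hinv : Function.Involutive ϑ) (hfpf : ∀ f, ϑ f ≠ f)
    (hconn : IsConnectedGraph ε ϑ)
    (𝒱 : Set V) (h𝒱 : 𝒱 ≠ Set.univ) :
    ((crossingEdges ε ϑ 𝒱).ncard : ℤ) =
        ((edgeSet ϑ).ncard : ℤ) - (edgesIn ε ϑ 𝒱).ncard - (edgesIn ε ϑ 𝒱ᶜ).ncard ∧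
      2 * ((pi0 ε ϑ 𝒱).ncard : ℤ) ≤
        ((edgeSet ϑ).ncard : ℤ) - (edgesIn ε ϑ 𝒱).ncard - (edgesIn ε ϑ 𝒱ᶜ).ncard
          + (Fcirc ε ϑ 𝒱).ncard := by
  classical
  have h1 : (edgeSet ϑ).ncard = ((edgesIn ε ϑ 𝒱).ncard + (edgesIn ε ϑ 𝒱ᶜ).ncard)
      + (crossingEdges ε ϑ 𝒱).ncard := by
    rw [edge_partition (ε := ε) hinv 𝒱,
      Set.ncard_union_eq (disj2 hinv 𝒱) (Set.toFinite _) (Set.toFinite _),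
      Set.ncard_union_eq (disj1 𝒱) (Set.toFinite _) (Set.toFinite _)]
  have h2 := fcirc_count hinv hconn h𝒱
  have h1' : ((edgeSet ϑ).ncard : ℤ) = ((edgesIn ε ϑ 𝒱).ncard + (edgesIn ε ϑ 𝒱ᶜ).ncard)
      + (crossingEdges ε ϑ 𝒱).ncard := by exact_mod_cast h1
  have h2' : 2 * ((pi0 ε ϑ 𝒱).ncard : ℤ) ≤
      (crossingEdges ε ϑ 𝒱).ncard + (Fcirc ε ϑ 𝒱).ncard := by exact_mod_cast h2
  constructor <;> linarith
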